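/- Let λ > 1 and ρ > 2λ + 1, and let ζ(λ, n) = Σ_{j=0}^{∞}(j+n)^(−λ). Then the series Σ_{n=k}^{∞} n^((1−ρ)/2)/ζ(λ, n) converges, and moreover ζ(λ, k)·Σ_{n=k}^{∞} n^((1−ρ)/2)/ζ(λ, n) = O(k^((3−ρ)/2)) as k → ∞. -/

import Mathlib

open Filter Asymptotics

noncomputable def hzeta (lam : ℝ) (n : ℕ) : ℝ := ∑' j : ℕ, ((j + n : ℕ) : ℝ) ^ (-lam)

lemma hz_summable {μ : ℝ} (hμ : 1 < μ) (k : ℕ) :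
    Summable (fun j : ℕ => ((j + k : ℕ) : ℝ) ^ (-μ)) := by
  have h : Summable (fun n : ℕ => (n : ℝ) ^ (-μ)) :=
    Real.summable_nat_rpow.2 (by linarith)
  exact (summable_nat_add_iff k).2 h

lemma hz_nonneg (μ : ℝ) (k : ℕ) : 0 ≤ hzeta μ k :=
  tsum_nonneg fun j => Real.rpow_nonneg (by positivity) _

lemma hz_lower {μ : ℝ} (hμ : 1 < μ) {k : ℕ} (hk : 1 ≤ k) :
    (2 : ℝ) ^ (-μ) * (k : ℝ) ^ (1 - μ) ≤ hzeta μ k := by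
  have hk0 : (0 : ℝ) < k := by exact_mod_cast hk
  have h1 : ∀ j ∈ Finset.range k, ((2 * k : ℕ) : ℝ) ^ (-μ) ≤ ((j + k : ℕ) : ℝ) ^ (-μ) := by
    intro j hj
    apply Real.rpow_le_rpow_of_nonpos (by positivity) _ (by linarith)
    push_cast
    have := Finset.mem_range.1 hj
    have : (j : ℝ) ≤ k := by exact_mod_cast this.le
    linarith
  have h2 : (k : ℝ) * ((2 * k : ℕ) : ℝ) ^ (-μ) ≤ ∑ j ∈ Finset.range k, ((j + k : ℕ) : ℝ) ^ (-μ) := by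
    calc (k : ℝ) * ((2 * k : ℕ) : ℝ) ^ (-μ)
        = ∑ _j ∈ Finset.range k, ((2 * k : ℕ) : ℝ) ^ (-μ) := by
          rw [Finset.sum_const, Finset.card_range, nsmul_eq_mul]
      _ ≤ _ := Finset.sum_le_sum h1
  have h3 : ∑ j ∈ Finset.range k, ((j + k : ℕ) : ℝ) ^ (-μ) ≤ hzeta μ k :=
    Summable.sum_le_tsum _ (fun i _ => Real.rpow_nonneg (by positivity) _) (hz_summable hμ k)
  refine le_trans (le_of_eq ?_) (h2.trans h3)
  push_cast
  rw [Real.mul_rpow (by norm_num) (by positivity), show (1 : ℝ) - μ = 1 + (-μ) by ring,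
    Real.rpow_add hk0, Real.rpow_one]
  ring

lemma hz_step {μ : ℝ} (hμ : 1 < μ) {m : ℕ} (hm : 1 ≤ m) :
    hzeta μ m ≤ (m : ℝ) ^ (1 - μ) + hzeta μ (2 * m) := by
  have hs := hz_summable hμ m
  have hsplit := Summable.sum_add_tsum_nat_add (f := fun j : ℕ => ((j + m : ℕ) : ℝ) ^ (-μ)) m hs
  have hm0 : (0 : ℝ) < m := by exact_mod_cast hm
  have htail : ∑' i : ℕ, ((i + m + m : ℕ) : ℝ) ^ (-μ) = hzeta μ (2 * m) := by
    unfold hzeta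
    congr 1; funext i; congr 2; omega
  have hhead : ∑ j ∈ Finset.range m, ((j + m : ℕ) : ℝ) ^ (-μ) ≤ (m : ℝ) ^ (1 - μ) := by
    calc ∑ j ∈ Finset.range m, ((j + m : ℕ) : ℝ) ^ (-μ)
        ≤ ∑ _j ∈ Finset.range m, (m : ℝ) ^ (-μ) := by
          apply Finset.sum_le_sum
          intro j _
          apply Real.rpow_le_rpow_of_nonpos hm0 _ (by linarith)
          push_cast; linarith [Nat.cast_nonneg (α := ℝ) j]
      _ = (m : ℝ) * (m : ℝ) ^ (-μ) := by
          rw [Finset.sum_const, Finset.card_range, nsmul_eq_mul]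
      _ = (m : ℝ) ^ (1 - μ) := by
          rw [show (1 : ℝ) - μ = 1 + (-μ) by ring, Real.rpow_add hm0, Real.rpow_one]
  have : hzeta μ m = ∑ j ∈ Finset.range m, ((j + m : ℕ) : ℝ) ^ (-μ) + hzeta μ (2 * m) := by
    rw [← htail]
    unfold hzeta
    rw [← hsplit]
  rw [this]
  linarith

lemma hz_tendsto_zero (μ : ℝ) {k : ℕ} (hk : 1 ≤ k) :
    Tendsto (fun N : ℕ => hzeta μ (2 ^ N * k)) atTop (nhds 0) := by
  have h1 : Tendsto (fun m : ℕ => hzeta μ m) atTop (nhds 0) := by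
    have := tendsto_sum_nat_add (f := fun n : ℕ => (n : ℝ) ^ (-μ))
    exact this
  have h2 : Tendsto (fun N : ℕ => 2 ^ N * k) atTop atTop := by
    apply tendsto_atTop_mono (fun N => ?_) tendsto_id
    calc N ≤ 2 ^ N := Nat.le_of_lt N.lt_two_pow_self
      _ ≤ 2 ^ N * k := Nat.le_mul_of_pos_right _ hk
  exact h1.comp h2

lemma hz_upper {μ : ℝ} (hμ : 1 < μ) {k : ℕ} (hk : 1 ≤ k) :
    hzeta μ k ≤ (1 - 2 ^ (1 - μ))⁻¹ * (k : ℝ) ^ (1 - μ) := by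
  have hk0 : (0 : ℝ) < k := by exact_mod_cast hk
  set r : ℝ := (2 : ℝ) ^ (1 - μ) with hr
  have hr0 : 0 < r := Real.rpow_pos_of_pos (by norm_num) _
  have hr1 : r < 1 := Real.rpow_lt_one_of_one_lt_of_neg (by norm_num) (by linarith)
  -- iterate
  have key : ∀ N : ℕ, hzeta μ k ≤
      (∑ i ∈ Finset.range N, r ^ i) * (k : ℝ) ^ (1 - μ) + hzeta μ (2 ^ N * k) := by
    intro N
    induction N with
    | zero => simp
    | succ N ih =>
      have hm : 1 ≤ 2 ^ N * k := Nat.one_le_iff_ne_zero.2 (by positivity)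
      have step := hz_step hμ hm
      have hcast : ((2 ^ N * k : ℕ) : ℝ) ^ (1 - μ) = r ^ N * (k : ℝ) ^ (1 - μ) := by
        push_cast
        rw [Real.mul_rpow (by positivity) (by positivity), hr,
          ← Real.rpow_natCast (2 : ℝ) N, ← Real.rpow_mul (by norm_num),
          ← Real.rpow_natCast ((2:ℝ) ^ (1 - μ)) N, ← Real.rpow_mul (by norm_num)]
        ring_nf
      have h2 : 2 * (2 ^ N * k) = 2 ^ (N + 1) * k := by ring
      rw [Finset.sum_range_succ, add_mul]
      calc hzeta μ k ≤ (∑ i ∈ Finset.range N, r ^ i) * (k : ℝ) ^ (1 - μ)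
            + hzeta μ (2 ^ N * k) := ih
        _ ≤ (∑ i ∈ Finset.range N, r ^ i) * (k : ℝ) ^ (1 - μ)
            + (((2 ^ N * k : ℕ) : ℝ) ^ (1 - μ) + hzeta μ (2 * (2 ^ N * k))) := by linarith
        _ = (∑ i ∈ Finset.range N, r ^ i) * (k : ℝ) ^ (1 - μ) + r ^ N * (k : ℝ) ^ (1 - μ)
            + hzeta μ (2 ^ (N + 1) * k) := by rw [hcast, h2]; ring
  have hsum : ∀ N : ℕ, (∑ i ∈ Finset.range N, r ^ i) ≤ (1 - r)⁻¹ := fun N => by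
    have := Summable.sum_le_tsum (Finset.range N) (fun i _ => (pow_nonneg hr0.le i))
      (summable_geometric_of_lt_one hr0.le hr1)
    rwa [tsum_geometric_of_lt_one hr0.le hr1] at this
  have key2 : ∀ N : ℕ, hzeta μ k ≤ (1 - r)⁻¹ * (k : ℝ) ^ (1 - μ) + hzeta μ (2 ^ N * k) := by
    intro N
    refine (key N).trans ?_
    have : (∑ i ∈ Finset.range N, r ^ i) * (k : ℝ) ^ (1 - μ)
        ≤ (1 - r)⁻¹ * (k : ℝ) ^ (1 - μ) :=
      mul_le_mul_of_nonneg_right (hsum N) (by positivity)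
    linarith
  have hlim : Tendsto (fun N : ℕ => (1 - r)⁻¹ * (k : ℝ) ^ (1 - μ) + hzeta μ (2 ^ N * k))
      atTop (nhds ((1 - r)⁻¹ * (k : ℝ) ^ (1 - μ))) := by
    have := (hz_tendsto_zero μ hk)
    simpa using tendsto_const_nhds.add this
  exact ge_of_tendsto hlim (Eventually.of_forall key2)

theorem stmt9 (lam ρ : ℝ) (hlam : 1 < lam) (hρ : 2 * lam + 1 < ρ) :
    (∀ k : ℕ, 1 ≤ k →
        Summable (fun n : ℕ => ((n + k : ℕ) : ℝ) ^ ((1 - ρ) / 2) / hzeta lam (n + k))) ∧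
      (fun k : ℕ =>
          hzeta lam k * ∑' n : ℕ, ((n + k : ℕ) : ℝ) ^ ((1 - ρ) / 2) / hzeta lam (n + k))
        =O[atTop] fun k : ℕ => (k : ℝ) ^ ((3 - ρ) / 2) := by
  set μ2 : ℝ := 1 - lam + (ρ - 1) / 2 with hμ2def
  have hμ2 : 1 < μ2 := by simp only [hμ2def]; linarith
  -- pointwise bound on terms
  have hbound : ∀ k : ℕ, 1 ≤ k → ∀ n : ℕ,
      ((n + k : ℕ) : ℝ) ^ ((1 - ρ) / 2) / hzeta lam (n + k)
        ≤ 2 ^ lam * ((n + k : ℕ) : ℝ) ^ (-μ2) := by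
    intro k hk n
    have hnk : 1 ≤ n + k := le_trans hk (Nat.le_add_left k n)
    have hx0 : (0 : ℝ) < ((n + k : ℕ) : ℝ) := by exact_mod_cast hnk
    set x : ℝ := ((n + k : ℕ) : ℝ) with hxdef
    have hlow : (2 : ℝ) ^ (-lam) * x ^ (1 - lam) ≤ hzeta lam (n + k) := hz_lower hlam hnk
    have hpos : (0 : ℝ) < (2 : ℝ) ^ (-lam) * x ^ (1 - lam) := by positivity
    have h1 : x ^ ((1 - ρ) / 2) / hzeta lam (n + k)
        ≤ x ^ ((1 - ρ) / 2) / ((2 : ℝ) ^ (-lam) * x ^ (1 - lam)) :=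
      div_le_div_of_nonneg_left (Real.rpow_nonneg hx0.le _) hpos hlow
    refine h1.trans (le_of_eq ?_)
    rw [show -μ2 = (1 - ρ) / 2 - (1 - lam) by simp only [hμ2def]; ring,
      Real.rpow_sub hx0, Real.rpow_neg (by norm_num : (0:ℝ) ≤ 2), Real.rpow_one]
    field_simp
    rw [show (1 - ρ - 2 * (1 - lam)) / 2 = (1 - ρ) / 2 + lam + (-1) by ring,
      Real.rpow_add hx0, Real.rpow_add hx0, Real.rpow_neg_one]
    field_simp
  have hterm_nonneg : ∀ k n : ℕ,
      0 ≤ ((n + k : ℕ) : ℝ) ^ ((1 - ρ) / 2) / hzeta lam (n + k) := fun k n =>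
    div_nonneg (Real.rpow_nonneg (by positivity) _) (hz_nonneg _ _)
  have hsum : ∀ k : ℕ, 1 ≤ k →
      Summable (fun n : ℕ => ((n + k : ℕ) : ℝ) ^ ((1 - ρ) / 2) / hzeta lam (n + k)) := by
    intro k hk
    exact Summable.of_nonneg_of_le (hterm_nonneg k) (hbound k hk)
      ((hz_summable hμ2 k).mul_left _)
  refine ⟨hsum, ?_⟩
  have hrlam : (2 : ℝ) ^ (1 - lam) < 1 :=
    Real.rpow_lt_one_of_one_lt_of_neg (by norm_num) (by linarith)
  have hrμ2 : (2 : ℝ) ^ (1 - μ2) < 1 :=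
    Real.rpow_lt_one_of_one_lt_of_neg (by norm_num) (by linarith)
  have hc1 : (0 : ℝ) ≤ (1 - 2 ^ (1 - lam))⁻¹ := by
    apply inv_nonneg.2; linarith
  have hc2 : (0 : ℝ) ≤ (1 - 2 ^ (1 - μ2))⁻¹ := by
    apply inv_nonneg.2; linarith
  rw [isBigO_iff]
  refine ⟨(1 - 2 ^ (1 - lam))⁻¹ * (2 ^ lam * (1 - 2 ^ (1 - μ2))⁻¹), ?_⟩
  filter_upwards [eventually_ge_atTop 1] with k hk
  have hk0 : (0 : ℝ) < (k : ℝ) := by exact_mod_cast hk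
  have htsum_nonneg : 0 ≤ ∑' n : ℕ, ((n + k : ℕ) : ℝ) ^ ((1 - ρ) / 2) / hzeta lam (n + k) :=
    tsum_nonneg (hterm_nonneg k)
  have hT : (∑' n : ℕ, ((n + k : ℕ) : ℝ) ^ ((1 - ρ) / 2) / hzeta lam (n + k))
      ≤ 2 ^ lam * hzeta μ2 k := by
    have := Summable.tsum_le_tsum (hbound k hk) (hsum k hk) ((hz_summable hμ2 k).mul_left _)
    rwa [tsum_mul_left] at this
  have hZ : hzeta lam k ≤ (1 - 2 ^ (1 - lam))⁻¹ * (k : ℝ) ^ (1 - lam) := hz_upper hlam hk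
  have hZ2 : hzeta μ2 k ≤ (1 - 2 ^ (1 - μ2))⁻¹ * (k : ℝ) ^ (1 - μ2) := hz_upper hμ2 hk
  rw [Real.norm_eq_abs, Real.norm_eq_abs,
    abs_of_nonneg (mul_nonneg (hz_nonneg _ _) htsum_nonneg),
    abs_of_nonneg (Real.rpow_nonneg hk0.le _)]
  calc hzeta lam k * ∑' n : ℕ, ((n + k : ℕ) : ℝ) ^ ((1 - ρ) / 2) / hzeta lam (n + k)
      ≤ ((1 - 2 ^ (1 - lam))⁻¹ * (k : ℝ) ^ (1 - lam)) * (2 ^ lam * hzeta μ2 k) := by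
        apply mul_le_mul hZ hT htsum_nonneg
        positivity
    _ ≤ ((1 - 2 ^ (1 - lam))⁻¹ * (k : ℝ) ^ (1 - lam))
        * (2 ^ lam * ((1 - 2 ^ (1 - μ2))⁻¹ * (k : ℝ) ^ (1 - μ2))) := by
        apply mul_le_mul_of_nonneg_left _ (by positivity)
        exact mul_le_mul_of_nonneg_left hZ2 (by positivity)
    _ = (1 - 2 ^ (1 - lam))⁻¹ * (2 ^ lam * (1 - 2 ^ (1 - μ2))⁻¹)
        * ((k : ℝ) ^ (1 - lam) * (k : ℝ) ^ (1 - μ2)) := by ring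
    _ = (1 - 2 ^ (1 - lam))⁻¹ * (2 ^ lam * (1 - 2 ^ (1 - μ2))⁻¹) * (k : ℝ) ^ ((3 - ρ) / 2) := by
        rw [← Real.rpow_add hk0, show (1 - lam) + (1 - μ2) = (3 - ρ) / 2 by
          simp only [hμ2def]; ring]
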